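/- Relative Fatou theorem on the upper half-plane (singular part): let η₁ and η₂ be finite Borel measures on ℝ with η₂ ≠ 0, and write the Lebesgue decomposition η₁ = f·η₂ + η_s where f is an η₂-integrable nonnegative function and η_s is a finite Borel measure singular with respect to η₂. Let h₁ and h₂ be the Poisson integrals of η₁ and η₂. Then for η_s-almost every x₀ ∈ ℝ and every aperture c > 0, h₁(z)/h₂(z) → ∞ as z → x₀ with z in the cone Γ_c(x₀). -/

import Mathlib

open MeasureTheory Filter Topology

/-- The Poisson kernel of the upper half-plane. -/
noncomputable def halfPlanePoissonKernel (z : ℂ) (x : ℝ) : ℝ :=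
  z.im / ((z.re - x) ^ 2 + z.im ^ 2)

/-- The Poisson integral of a measure on `ℝ`. -/
noncomputable def poissonIntegral (η : Measure ℝ) (z : ℂ) : ℝ :=
  ∫ x, halfPlanePoissonKernel z x ∂η

/-- The nontangential cone of aperture `c` at `x₀`. -/
def cone (x₀ c : ℝ) : Set ℂ :=
  {z : ℂ | 0 < z.im ∧ |z.re - x₀| ≤ c * z.im}

namespace RelFatou

open Set Metric ENNReal

lemma denom_pos {z : ℂ} (hz : 0 < z.im) (x : ℝ) : 0 < (z.re - x) ^ 2 + z.im ^ 2 :=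
  add_pos_of_nonneg_of_pos (sq_nonneg _) (pow_pos hz 2)

lemma pk_pos {z : ℂ} (hz : 0 < z.im) (x : ℝ) : 0 < halfPlanePoissonKernel z x :=
  div_pos hz (denom_pos hz x)

lemma pk_le {z : ℂ} (hz : 0 < z.im) (x : ℝ) : halfPlanePoissonKernel z x ≤ 1 / z.im := by
  rw [halfPlanePoissonKernel, div_le_div_iff₀ (denom_pos hz x) hz]
  nlinarith [sq_nonneg (z.re - x)]

lemma pk_continuous {z : ℂ} (hz : 0 < z.im) : Continuous (halfPlanePoissonKernel z) := by
  apply continuous_const.div (by fun_prop)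
  exact fun x => (denom_pos hz x).ne'

lemma pk_integrable (ν : Measure ℝ) [IsFiniteMeasure ν] {z : ℂ} (hz : 0 < z.im) :
    Integrable (halfPlanePoissonKernel z) ν := by
  refine (integrable_const (1 / z.im)).mono' (pk_continuous hz).aestronglyMeasurable ?_
  refine ae_of_all _ fun x => ?_
  rw [Real.norm_eq_abs, abs_of_pos (pk_pos hz x)]
  exact pk_le hz x

/-- The Poisson integral as a lower Lebesgue integral. -/
noncomputable def H (ν : Measure ℝ) (z : ℂ) : ℝ≥0∞ :=
  ∫⁻ x, ENNReal.ofReal (halfPlanePoissonKernel z x) ∂ν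

lemma pI_eq (ν : Measure ℝ) {z : ℂ} (hz : 0 < z.im) :
    poissonIntegral ν z = (H ν z).toReal := by
  rw [poissonIntegral, integral_eq_lintegral_of_nonneg_ae
    (ae_of_all _ fun x => (pk_pos hz x).le) (pk_continuous hz).aestronglyMeasurable, H]

lemma H_lt_top (ν : Measure ℝ) [IsFiniteMeasure ν] {z : ℂ} (hz : 0 < z.im) :
    H ν z < ⊤ := by
  refine lt_of_le_of_lt (lintegral_mono fun x => ENNReal.ofReal_le_ofReal (pk_le hz x)) ?_
  rw [lintegral_const]
  exact ENNReal.mul_lt_top ENNReal.ofReal_lt_top (measure_lt_top _ _)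

lemma H_pos (ν : Measure ℝ) (hν : ν ≠ 0) {z : ℂ} (hz : 0 < z.im) : 0 < H ν z := by
  rw [H, lintegral_pos_iff_support ((pk_continuous hz).measurable.ennreal_ofReal)]
  have : Function.support (fun x => ENNReal.ofReal (halfPlanePoissonKernel z x)) = Set.univ := by
    ext x
    simp only [Function.mem_support, Set.mem_univ, iff_true]
    exact (ENNReal.ofReal_pos.2 (pk_pos hz x)).ne'
  rw [this]
  exact Measure.measure_univ_pos.2 hν

lemma pI_pos (ν : Measure ℝ) [IsFiniteMeasure ν] (hν : ν ≠ 0) {z : ℂ} (hz : 0 < z.im) :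
    0 < poissonIntegral ν z := by
  rw [pI_eq ν hz]
  exact ENNReal.toReal_pos (H_pos ν hν hz).ne' (H_lt_top ν hz).ne

/-- Kernel comparison in the cone. -/
lemma pk_cone_le {x₀ c : ℝ} {z : ℂ} (hz : z ∈ cone x₀ c) (x : ℝ) :
    halfPlanePoissonKernel z x ≤ (2 + 2 * c ^ 2) * halfPlanePoissonKernel (⟨x₀, z.im⟩ : ℂ) x := by
  obtain ⟨hy, hre⟩ := hz
  have h1 := denom_pos (z := z) hy x
  have h2 := denom_pos (z := (⟨x₀, z.im⟩ : ℂ)) hy x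
  simp only [halfPlanePoissonKernel] at *
  rw [← mul_div_assoc, div_le_div_iff₀ h1 h2]
  have habs : (z.re - x₀) ^ 2 ≤ c ^ 2 * z.im ^ 2 := by
    nlinarith [sq_abs (z.re - x₀), abs_nonneg (z.re - x₀), hre,
      mul_self_nonneg (c * z.im - |z.re - x₀|)]
  have hD : (x₀ - x) ^ 2 + z.im ^ 2 ≤ (2 + 2 * c ^ 2) * ((z.re - x) ^ 2 + z.im ^ 2) := by
    nlinarith [habs, sq_nonneg ((z.re - x) + (z.re - x₀)), sq_nonneg ((z.re - x) - (z.re - x₀)),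
      sq_nonneg z.im, sq_nonneg c, sq_nonneg (z.re - x)]
  nlinarith [mul_le_mul_of_nonneg_left hD hy.le]

lemma pk_cone_ge {x₀ c : ℝ} {z : ℂ} (hz : z ∈ cone x₀ c) (x : ℝ) :
    halfPlanePoissonKernel (⟨x₀, z.im⟩ : ℂ) x ≤ (2 + 2 * c ^ 2) * halfPlanePoissonKernel z x := by
  obtain ⟨hy, hre⟩ := hz
  have h1 := denom_pos (z := z) hy x
  have h2 := denom_pos (z := (⟨x₀, z.im⟩ : ℂ)) hy x
  simp only [halfPlanePoissonKernel] at *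
  rw [← mul_div_assoc, div_le_div_iff₀ h2 h1]
  have habs : (z.re - x₀) ^ 2 ≤ c ^ 2 * z.im ^ 2 := by
    nlinarith [sq_abs (z.re - x₀), abs_nonneg (z.re - x₀), hre,
      mul_self_nonneg (c * z.im - |z.re - x₀|)]
  have hD : (z.re - x) ^ 2 + z.im ^ 2 ≤ (2 + 2 * c ^ 2) * ((x₀ - x) ^ 2 + z.im ^ 2) := by
    nlinarith [habs, sq_nonneg ((x₀ - x) + (z.re - x₀)), sq_nonneg ((x₀ - x) - (z.re - x₀)),
      sq_nonneg z.im, sq_nonneg c, sq_nonneg (x₀ - x)]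
  nlinarith [mul_le_mul_of_nonneg_left hD hy.le]

/-- superlevel sets of the vertical Poisson kernel are closed balls -/
lemma level_eq {x₀ y t : ℝ} (hy : 0 < y) (ht : 0 < t) (hty : t ≤ 1 / y) :
    {x : ℝ | t ≤ halfPlanePoissonKernel (⟨x₀, y⟩ : ℂ) x} = closedBall x₀ (Real.sqrt (y / t - y ^ 2)) := by
  have hs : 0 ≤ y / t - y ^ 2 := by
    rw [sub_nonneg, le_div_iff₀ ht]
    calc y ^ 2 * t ≤ y ^ 2 * (1 / y) := by
          apply mul_le_mul_of_nonneg_left hty (sq_nonneg y)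
      _ = y := by field_simp [pow_two]
  ext x
  simp only [Set.mem_setOf_eq, Metric.mem_closedBall, Real.dist_eq, halfPlanePoissonKernel]
  have hD : 0 < (x₀ - x) ^ 2 + y ^ 2 := denom_pos (z := (⟨x₀, y⟩ : ℂ)) hy x
  constructor
  · intro h
    have hDle : (x₀ - x) ^ 2 + y ^ 2 ≤ y / t := by
      rw [le_div_iff₀ ht]
      calc ((x₀ - x) ^ 2 + y ^ 2) * t ≤ ((x₀ - x) ^ 2 + y ^ 2) * (y / ((x₀ - x) ^ 2 + y ^ 2)) :=
            mul_le_mul_of_nonneg_left h hD.le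
        _ = y := by field_simp
    have : (x - x₀) ^ 2 ≤ y / t - y ^ 2 := by nlinarith [sq_nonneg (x - x₀), sq_nonneg (x₀ - x)]
    calc |x - x₀| = Real.sqrt ((x - x₀) ^ 2) := (Real.sqrt_sq_eq_abs _).symm
      _ ≤ Real.sqrt (y / t - y ^ 2) := Real.sqrt_le_sqrt this
  · intro h
    have h2 : (x - x₀) ^ 2 ≤ y / t - y ^ 2 := by
      calc (x - x₀) ^ 2 = |x - x₀| ^ 2 := (sq_abs _).symm
        _ ≤ Real.sqrt (y / t - y ^ 2) ^ 2 := by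
            apply pow_le_pow_left₀ (abs_nonneg _) h
        _ = y / t - y ^ 2 := Real.sq_sqrt hs
    rw [le_div_iff₀ hD]
    have : (x₀ - x) ^ 2 + y ^ 2 ≤ y / t := by nlinarith
    calc t * ((x₀ - x) ^ 2 + y ^ 2) ≤ t * (y / t) := mul_le_mul_of_nonneg_left this ht.le
      _ = y := by field_simp

lemma level_empty {x₀ y t : ℝ} (hy : 0 < y) (hty : 1 / y < t) :
    {x : ℝ | t ≤ halfPlanePoissonKernel (⟨x₀, y⟩ : ℂ) x} = ∅ := by
  ext x
  simp only [Set.mem_setOf_eq, Set.mem_empty_iff_false, iff_false, not_le, halfPlanePoissonKernel]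
  have hD : 0 < (x₀ - x) ^ 2 + y ^ 2 := denom_pos (z := (⟨x₀, y⟩ : ℂ)) hy x
  calc y / ((x₀ - x) ^ 2 + y ^ 2) ≤ y / y ^ 2 := by
        apply div_le_div_of_nonneg_left hy.le (pow_pos hy 2)
        nlinarith [sq_nonneg (x₀ - x)]
    _ = 1 / y := by field_simp [pow_two]
    _ < t := hty

/-- Layer-cake representation of `H`. -/
lemma H_layercake (ν : Measure ℝ) {x₀ y : ℝ} (hy : 0 < y) :
    H ν (⟨x₀, y⟩ : ℂ) = ∫⁻ t in Set.Ioi (0 : ℝ), ν {x | t ≤ halfPlanePoissonKernel (⟨x₀, y⟩ : ℂ) x} := by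
  exact lintegral_eq_lintegral_meas_le ν (ae_of_all _ fun x => (pk_pos hy x).le)
    (pk_continuous hy).measurable.aemeasurable

/-- Lower bound for the vertical Poisson integral. -/
lemma H_lower (ν : Measure ℝ) {x₀ y : ℝ} (hy : 0 < y) :
    ENNReal.ofReal (1 / (2 * y)) * ν (closedBall x₀ y) ≤ H ν (⟨x₀, y⟩ : ℂ) := by
  have hpt : ∀ x ∈ closedBall x₀ y,
      ENNReal.ofReal (1 / (2 * y)) ≤ ENNReal.ofReal (halfPlanePoissonKernel (⟨x₀, y⟩ : ℂ) x) := by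
    intro x hx
    apply ENNReal.ofReal_le_ofReal
    rw [Metric.mem_closedBall, Real.dist_eq] at hx
    have hD : 0 < (x₀ - x) ^ 2 + y ^ 2 := denom_pos (z := (⟨x₀, y⟩ : ℂ)) hy x
    rw [halfPlanePoissonKernel]
    rw [div_le_div_iff₀ (by positivity) hD]
    have : (x₀ - x) ^ 2 ≤ y ^ 2 := by
      have := sq_abs (x - x₀)
      nlinarith [pow_le_pow_left₀ (abs_nonneg (x - x₀)) hx 2]
    nlinarith
  calc ENNReal.ofReal (1 / (2 * y)) * ν (closedBall x₀ y)
      = ∫⁻ _ in closedBall x₀ y, ENNReal.ofReal (1 / (2 * y)) ∂ν := (setLIntegral_const _ _).symm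
    _ ≤ ∫⁻ x in closedBall x₀ y, ENNReal.ofReal (halfPlanePoissonKernel (⟨x₀, y⟩ : ℂ) x) ∂ν := by
        apply setLIntegral_mono ((pk_continuous hy).measurable.ennreal_ofReal) hpt
    _ ≤ H ν (⟨x₀, y⟩ : ℂ) := setLIntegral_le_lintegral _ _

/-- Key estimate: the vertical Poisson integral of `η₂` is controlled by that of `η_s`
plus a small term, given smallness of balls. -/
lemma key_estimate (η₂ η_s : Measure ℝ) [IsFiniteMeasure η₂] {x₀ ε r₀ y : ℝ}
    (hε : 0 < ε) (hr₀ : 0 < r₀) (hy : 0 < y)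
    (hball : ∀ r, 0 < r → r ≤ r₀ →
      η₂ (closedBall x₀ r) ≤ ENNReal.ofReal ε * η_s (closedBall x₀ r)) :
    H η₂ (⟨x₀, y⟩ : ℂ) ≤ ENNReal.ofReal ε * H η_s (⟨x₀, y⟩ : ℂ)
      + η₂ Set.univ * ENNReal.ofReal (y / r₀ ^ 2) := by
  set t₀ : ℝ := y / (r₀ ^ 2 + y ^ 2) with ht₀_def
  have ht₀ : 0 < t₀ := div_pos hy (by positivity)
  set S : ℝ → Set ℝ := fun t => {x | t ≤ halfPlanePoissonKernel (⟨x₀, y⟩ : ℂ) x} with hS_def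
  have hsplit : H η₂ (⟨x₀, y⟩ : ℂ)
      = (∫⁻ t in Set.Ioc 0 t₀, η₂ (S t)) + ∫⁻ t in Set.Ioi t₀, η₂ (S t) := by
    rw [H_layercake η₂ hy, ← Set.Ioc_union_Ioi_eq_Ioi ht₀.le,
      lintegral_union measurableSet_Ioi (Set.Ioc_disjoint_Ioi le_rfl)]
  rw [hsplit, add_comm (ENNReal.ofReal ε * H η_s (⟨x₀, y⟩ : ℂ))]
  apply add_le_add
  · -- far part
    calc ∫⁻ t in Set.Ioc 0 t₀, η₂ (S t)
        ≤ ∫⁻ _ in Set.Ioc 0 t₀, η₂ Set.univ := by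
          apply lintegral_mono fun t => measure_mono (Set.subset_univ _)
      _ = η₂ Set.univ * ENNReal.ofReal t₀ := by
          rw [setLIntegral_const]
          congr 1
          rw [Real.volume_Ioc, sub_zero]
      _ ≤ η₂ Set.univ * ENNReal.ofReal (y / r₀ ^ 2) := by
          apply mul_le_mul_right
          apply ENNReal.ofReal_le_ofReal
          apply div_le_div_of_nonneg_left hy.le (by positivity)
          nlinarith [sq_nonneg y]
  · -- near part
    have hae : ∀ᵐ t ∂(volume.restrict (Set.Ioi t₀)),
        η₂ (S t) ≤ ENNReal.ofReal ε * η_s (S t) := by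
      have hone : (volume.restrict (Set.Ioi t₀)) {1 / y} = 0 := by
        rw [Measure.restrict_apply (measurableSet_singleton _)]
        exact measure_mono_null Set.inter_subset_left Real.volume_singleton
      filter_upwards [ae_restrict_mem measurableSet_Ioi,
        measure_eq_zero_iff_ae_notMem.mp hone] with t ht hne
      rcases lt_trichotomy t (1 / y) with hlt | heq | hgt
      · have ht_pos : 0 < t := lt_trans ht₀ ht
        have hrad_pos : 0 < y / t - y ^ 2 := by
          rw [sub_pos, lt_div_iff₀ ht_pos]
          calc y ^ 2 * t < y ^ 2 * (1 / y) := by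
                apply mul_lt_mul_of_pos_left hlt (by positivity)
            _ = y := by field_simp [pow_two]
        have hSt : S t = closedBall x₀ (Real.sqrt (y / t - y ^ 2)) :=
          level_eq hy ht_pos hlt.le
        have hrad_le : Real.sqrt (y / t - y ^ 2) ≤ r₀ := by
          have h1 : y / t - y ^ 2 ≤ r₀ ^ 2 := by
            have h2 : y / t < r₀ ^ 2 + y ^ 2 := by
              calc y / t < y / t₀ := div_lt_div_of_pos_left hy ht₀ ht
                _ = r₀ ^ 2 + y ^ 2 := by rw [ht₀_def]; field_simp
            linarith
          calc Real.sqrt (y / t - y ^ 2) ≤ Real.sqrt (r₀ ^ 2) := Real.sqrt_le_sqrt h1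
            _ = r₀ := Real.sqrt_sq hr₀.le
        rw [hSt]
        exact hball _ (Real.sqrt_pos.mpr hrad_pos) hrad_le
      · exact absurd (Set.mem_singleton_iff.mpr heq) hne
      · have : S t = ∅ := level_empty hy hgt
        simp [this]
    calc ∫⁻ t in Set.Ioi t₀, η₂ (S t)
        ≤ ∫⁻ t in Set.Ioi t₀, ENNReal.ofReal ε * η_s (S t) := lintegral_mono_ae hae
      _ = ENNReal.ofReal ε * ∫⁻ t in Set.Ioi t₀, η_s (S t) :=
          lintegral_const_mul' _ _ ENNReal.ofReal_ne_top
      _ ≤ ENNReal.ofReal ε * ∫⁻ t in Set.Ioi 0, η_s (S t) := by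
          apply mul_le_mul_right
          exact lintegral_mono_set (Set.Ioi_subset_Ioi ht₀.le)
      _ = ENNReal.ofReal ε * H η_s (⟨x₀, y⟩ : ℂ) := by rw [H_layercake η_s hy]

/-- The vertical estimate at a good point. -/
lemma vertical (η₂ η_s : Measure ℝ) [IsFiniteMeasure η₂] [IsFiniteMeasure η_s] {x₀ : ℝ}
    (hA1 : ∀ ε : ℝ, 0 < ε → ∃ r₀ > 0, ∀ r, 0 < r → r ≤ r₀ →
      η₂ (closedBall x₀ r) ≤ ENNReal.ofReal ε * η_s (closedBall x₀ r))
    (hA2 : ∃ κ : ℝ≥0∞, κ ≠ 0 ∧ κ ≠ ⊤ ∧ ∃ δ > (0:ℝ), ∀ y, 0 < y → y ≤ δ →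
      κ ≤ H η_s (⟨x₀, y⟩ : ℂ))
    (K : ℝ) (hK : 0 < K) :
    ∃ δ' > (0:ℝ), ∀ y, 0 < y → y ≤ δ' →
      K * poissonIntegral η₂ (⟨x₀, y⟩ : ℂ) ≤ poissonIntegral η_s (⟨x₀, y⟩ : ℂ) := by
  obtain ⟨κ, hκ0, hκtop, δ, hδ, hκ⟩ := hA2
  obtain ⟨r₀, hr₀, hball⟩ := hA1 (1 / (2 * K)) (by positivity)
  have hκR : 0 < κ.toReal := ENNReal.toReal_pos hκ0 hκtop
  set M : ℝ := (η₂ Set.univ).toReal with hM_def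
  have hM0 : 0 ≤ M := ENNReal.toReal_nonneg
  set δ₂ : ℝ := r₀ ^ 2 * (1 / (2 * K)) * κ.toReal / (M + 1) with hδ₂_def
  have hδ₂ : 0 < δ₂ := by positivity
  refine ⟨min δ δ₂, lt_min hδ hδ₂, fun y hy hyle => ?_⟩
  have hyδ : y ≤ δ := hyle.trans (min_le_left _ _)
  have hyδ₂ : y ≤ δ₂ := hyle.trans (min_le_right _ _)
  -- the small term is at most ofReal (1/(2K)) * κ
  have hsmall : η₂ Set.univ * ENNReal.ofReal (y / r₀ ^ 2)
      ≤ ENNReal.ofReal (1 / (2 * K)) * κ := by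
    have h1 : η₂ Set.univ = ENNReal.ofReal M := by
      rw [hM_def, ENNReal.ofReal_toReal (measure_ne_top _ _)]
    have h2 : κ = ENNReal.ofReal κ.toReal := (ENNReal.ofReal_toReal hκtop).symm
    rw [h1, h2, ← ENNReal.ofReal_mul hM0, ← ENNReal.ofReal_mul (by positivity)]
    apply ENNReal.ofReal_le_ofReal
    rw [hδ₂_def] at hyδ₂
    have hMM : M ≤ M + 1 := by linarith
    have := mul_le_mul_of_nonneg_left hyδ₂ hM0
    calc M * (y / r₀ ^ 2) = M * y / r₀ ^ 2 := by ring
      _ ≤ M * (r₀ ^ 2 * (1 / (2 * K)) * κ.toReal / (M + 1)) / r₀ ^ 2 := by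
          apply div_le_div_of_nonneg_right _ (by positivity)
          exact this
      _ = (1 / (2 * K)) * κ.toReal * (M / (M + 1)) := by field_simp
      _ ≤ (1 / (2 * K)) * κ.toReal * 1 := by
          apply mul_le_mul_of_nonneg_left _ (by positivity)
          rw [div_le_one (by linarith)]; linarith
      _ = 1 / (2 * K) * κ.toReal := by ring
  set v : ℂ := (⟨x₀, y⟩ : ℂ) with hv_def
  have hv_im : (0:ℝ) < v.im := hy
  have hHs_lb : κ ≤ H η_s v := hκ y hy hyδ
  have hmain : H η₂ v ≤ ENNReal.ofReal (1 / K) * H η_s v := by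
    calc H η₂ v ≤ ENNReal.ofReal (1 / (2 * K)) * H η_s v
          + η₂ Set.univ * ENNReal.ofReal (y / r₀ ^ 2) :=
        key_estimate η₂ η_s (by positivity) hr₀ hy hball
      _ ≤ ENNReal.ofReal (1 / (2 * K)) * H η_s v
          + ENNReal.ofReal (1 / (2 * K)) * H η_s v := by
          apply add_le_add_right
          exact hsmall.trans (mul_le_mul_right hHs_lb _)
      _ = ENNReal.ofReal (1 / (2 * K) + 1 / (2 * K)) * H η_s v := by
          rw [ENNReal.ofReal_add (by positivity) (by positivity), add_mul]
      _ = ENNReal.ofReal (1 / K) * H η_s v := by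
          rw [show 1 / (2 * K) + 1 / (2 * K) = 1 / K by rw [← add_div, div_eq_div_iff (by positivity) hK.ne']; ring]
  have hHs_fin : H η_s v ≠ ⊤ := (H_lt_top η_s hv_im).ne
  have ht2 : (H η₂ v).toReal ≤ (ENNReal.ofReal (1 / K) * H η_s v).toReal :=
    ENNReal.toReal_mono (ENNReal.mul_ne_top ENNReal.ofReal_ne_top hHs_fin) hmain
  have ht3 : (ENNReal.ofReal (1 / K) * H η_s v).toReal = (1 / K) * (H η_s v).toReal := by
    rw [ENNReal.toReal_mul, ENNReal.toReal_ofReal (by positivity)]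
  rw [pI_eq η₂ hv_im, pI_eq η_s hv_im]
  calc K * (H η₂ v).toReal ≤ K * ((1 / K) * (H η_s v).toReal) :=
        mul_le_mul_of_nonneg_left (ht2.trans_eq ht3) hK.le
    _ = (H η_s v).toReal := by field_simp

end RelFatou

open RelFatou Set Metric ENNReal in
theorem relative_fatou_singular
    (η₁ η₂ η_s : Measure ℝ) [IsFiniteMeasure η₁] [IsFiniteMeasure η₂] [IsFiniteMeasure η_s]
    (hη₂ : η₂ ≠ 0)
    (f : ℝ → ℝ) (hf_nonneg : 0 ≤ f) (hf_int : Integrable f η₂)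
    (hsing : η_s.MutuallySingular η₂)
    (hdec : η₁ = η₂.withDensity (fun x => ENNReal.ofReal (f x)) + η_s) :
    ∀ᵐ x₀ : ℝ ∂η_s, ∀ c > (0 : ℝ),
      Tendsto (fun z : ℂ => poissonIntegral η₁ z / poissonIntegral η₂ z)
        (𝓝[cone x₀ c] (x₀ : ℂ)) atTop := by
  -- the withDensity part is a finite measure
  set w : Measure ℝ := η₂.withDensity (fun x => ENNReal.ofReal (f x)) with hw_def
  have hw_fin : IsFiniteMeasure w := by
    constructor
    have : w Set.univ ≤ η₁ Set.univ := by
      rw [hdec]; simp [Measure.add_apply]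
    exact lt_of_le_of_lt this (measure_lt_top _ _)
  -- a.e. condition A1 : ratio of balls tends to 0
  have hrn : η₂.rnDeriv η_s =ᵐ[η_s] 0 := (Measure.rnDeriv_eq_zero η₂ η_s).mpr hsing.symm
  have hbes1 := Besicovitch.ae_tendsto_rnDeriv η₂ η_s
  have hbes2 := Besicovitch.ae_tendsto_rnDeriv volume η_s
  have hfin2 := Measure.rnDeriv_lt_top volume η_s
  filter_upwards [hrn, hbes1, hbes2, hfin2] with x₀ hrn0 h1 h2 h2fin
  rw [hrn0] at h1
  -- A1
  have hA1 : ∀ ε : ℝ, 0 < ε → ∃ r₀ > (0:ℝ), ∀ r, 0 < r → r ≤ r₀ →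
      η₂ (closedBall x₀ r) ≤ ENNReal.ofReal ε * η_s (closedBall x₀ r) := by
    intro ε hε
    have hev : ∀ᶠ r in 𝓝[>] (0:ℝ),
        η₂ (closedBall x₀ r) / η_s (closedBall x₀ r) < ENNReal.ofReal ε := by
      apply h1.eventually_lt_const
      simpa using ENNReal.ofReal_pos.mpr hε
    obtain ⟨r₀, hr₀, hsub⟩ := mem_nhdsGT_iff_exists_Ioc_subset.mp hev
    refine ⟨r₀, hr₀, fun r hr hrle => ?_⟩
    have hlt := hsub ⟨hr, hrle⟩
    simp only [Set.mem_setOf_eq] at hlt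
    by_cases hs0 : η_s (closedBall x₀ r) = 0
    · by_cases h20 : η₂ (closedBall x₀ r) = 0
      · simp [h20]
      · rw [hs0, ENNReal.div_zero h20] at hlt
        exact absurd hlt (by simp)
    · rw [ENNReal.div_lt_iff (Or.inl hs0) (Or.inl (measure_ne_top _ _))] at hlt
      exact le_of_lt hlt
  -- A2
  have hA2 : ∃ κ : ℝ≥0∞, κ ≠ 0 ∧ κ ≠ ⊤ ∧ ∃ δ > (0:ℝ), ∀ y, 0 < y → y ≤ δ →
      κ ≤ H η_s (⟨x₀, y⟩ : ℂ) := by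
    set L := volume.rnDeriv η_s x₀ with hL_def
    have hLtop : L + 1 ≠ ⊤ := by
      rw [hL_def]
      exact ENNReal.add_ne_top.mpr ⟨h2fin.ne, one_ne_top⟩
    have hL1 : L < L + 1 := ENNReal.lt_add_right h2fin.ne one_ne_zero
    have hev : ∀ᶠ r in 𝓝[>] (0:ℝ),
        volume (closedBall x₀ r) / η_s (closedBall x₀ r) < L + 1 :=
      h2.eventually_lt_const hL1
    obtain ⟨δ, hδ, hsub⟩ := mem_nhdsGT_iff_exists_Ioc_subset.mp hev
    have hL10 : L + 1 ≠ 0 := by simp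
    refine ⟨(L + 1)⁻¹, ENNReal.inv_ne_zero.mpr hLtop, ENNReal.inv_ne_top.mpr hL10,
      δ, hδ, fun y hy hyδ => ?_⟩
    have hlt := hsub ⟨hy, hyδ⟩
    simp only [Set.mem_setOf_eq] at hlt
    have hvol : volume (closedBall x₀ y) = ENNReal.ofReal (2 * y) := by
      rw [Real.volume_closedBall]
    have hvol0 : volume (closedBall x₀ y) ≠ 0 := by
      rw [hvol]; exact (ENNReal.ofReal_pos.mpr (by positivity)).ne'
    have hs0 : η_s (closedBall x₀ y) ≠ 0 := by
      intro h0
      rw [h0, ENNReal.div_zero hvol0] at hlt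
      exact absurd hlt (by simp)
    rw [ENNReal.div_lt_iff (Or.inl hs0) (Or.inl (measure_ne_top _ _))] at hlt
    -- volume(ball) < (L+1) * η_s(ball), so (L+1)⁻¹ * volume(ball) ≤ η_s(ball)
    have hball_lb : (L + 1)⁻¹ * ENNReal.ofReal (2 * y) ≤ η_s (closedBall x₀ y) := by
      have hlt2 : volume (closedBall x₀ y) / (L + 1) < η_s (closedBall x₀ y) := by
        rw [ENNReal.div_lt_iff (Or.inl hL10) (Or.inl hLtop), mul_comm]
        exact hlt
      rw [← hvol, mul_comm, ← div_eq_mul_inv]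
      exact hlt2.le
    calc (L + 1)⁻¹ = (L + 1)⁻¹ * (ENNReal.ofReal (1 / (2 * y)) * ENNReal.ofReal (2 * y)) := by
          rw [← ENNReal.ofReal_mul (by positivity)]
          rw [show 1 / (2 * y) * (2 * y) = 1 by field_simp]
          simp
      _ = ENNReal.ofReal (1 / (2 * y)) * ((L + 1)⁻¹ * ENNReal.ofReal (2 * y)) := by ring
      _ ≤ ENNReal.ofReal (1 / (2 * y)) * η_s (closedBall x₀ y) :=
          mul_le_mul_right hball_lb _
      _ ≤ H η_s (⟨x₀, y⟩ : ℂ) := H_lower η_s hy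
  -- now fix the aperture
  intro c hc
  rw [Filter.tendsto_atTop]
  intro b
  set C : ℝ := 2 + 2 * c ^ 2 with hC_def
  have hC : (2:ℝ) ≤ C := by nlinarith
  have hC0 : (0:ℝ) < C := by linarith
  set M : ℝ := max b 1 with hM_def
  have hM1 : (1:ℝ) ≤ M := le_max_right _ _
  have hM0 : (0:ℝ) < M := by linarith
  obtain ⟨δ', hδ', hvert⟩ := vertical η₂ η_s hA1 hA2 (M * C ^ 2) (by positivity)
  have him : ∀ᶠ z : ℂ in 𝓝[cone x₀ c] (x₀ : ℂ), z.im < δ' := by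
    have : Tendsto Complex.im (𝓝[cone x₀ c] (x₀:ℂ)) (𝓝 0) := by
      have h0 : Tendsto Complex.im (𝓝 (x₀:ℂ)) (𝓝 ((x₀:ℂ).im)) :=
        Complex.continuous_im.continuousAt
      rw [Complex.ofReal_im] at h0
      exact h0.mono_left nhdsWithin_le_nhds
    exact this.eventually_lt_const hδ'
  filter_upwards [him, eventually_mem_nhdsWithin] with z hzim hz
  have hy : 0 < z.im := hz.1
  set v : ℂ := (⟨x₀, z.im⟩ : ℂ) with hv_def
  have hv_im : (0:ℝ) < v.im := hy
  -- comparison of Poisson integrals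
  have hcomp2 : poissonIntegral η₂ z ≤ C * poissonIntegral η₂ v := by
    rw [show C * poissonIntegral η₂ v = ∫ x, C * halfPlanePoissonKernel v x ∂η₂ by
      rw [poissonIntegral, ← integral_const_mul]]
    exact integral_mono (pk_integrable η₂ hy) ((pk_integrable η₂ hv_im).const_mul _)
      (fun x => pk_cone_le hz x)
  have hcompS : poissonIntegral η_s v ≤ C * poissonIntegral η_s z := by
    rw [show C * poissonIntegral η_s z = ∫ x, C * halfPlanePoissonKernel z x ∂η_s by
      rw [poissonIntegral, ← integral_const_mul]]
    exact integral_mono (pk_integrable η_s hv_im) ((pk_integrable η_s hy).const_mul _)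
      (fun x => pk_cone_ge hz x)
  have hvert' : M * C ^ 2 * poissonIntegral η₂ v ≤ poissonIntegral η_s v :=
    hvert z.im hy hzim.le
  -- h₁ ≥ h_s
  have hone : poissonIntegral η_s z ≤ poissonIntegral η₁ z := by
    have heq : poissonIntegral η₁ z
        = (∫ x, halfPlanePoissonKernel z x ∂w) + poissonIntegral η_s z := by
      rw [hdec, poissonIntegral,
        integral_add_measure (pk_integrable _ hy) (pk_integrable _ hy)]
      rfl
    have h0 : 0 ≤ ∫ x, halfPlanePoissonKernel z x ∂w :=
      integral_nonneg fun x => (pk_pos hy x).le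
    rw [heq]
    have : poissonIntegral η_s z = ∫ x, halfPlanePoissonKernel z x ∂η_s := rfl
    linarith
  have h2pos : 0 < poissonIntegral η₂ z := pI_pos η₂ hη₂ hy
  have h2vpos : 0 < poissonIntegral η₂ v := pI_pos η₂ hη₂ hv_im
  -- chain the inequalities
  have hchain : M * poissonIntegral η₂ z ≤ poissonIntegral η_s z := by
    have h1 : M * C ^ 2 * poissonIntegral η₂ v ≤ C * poissonIntegral η_s z :=
      hvert'.trans hcompS
    nlinarith [mul_le_mul_of_nonneg_left hcomp2 (by positivity : (0:ℝ) ≤ M * C)]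
  rw [le_div_iff₀ h2pos]
  calc b * poissonIntegral η₂ z ≤ M * poissonIntegral η₂ z :=
        mul_le_mul_of_nonneg_right (le_max_left _ _) h2pos.le
    _ ≤ poissonIntegral η_s z := hchain
    _ ≤ poissonIntegral η₁ z := hone
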